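/- Let δ > 0 and let κ, μ₀, G_c be real numbers with D := (9κ − 15μ₀)·(125δ/1848) + 15μ₀·(5δ/24) > 0 and G_c ≥ 0, and set s_c = √(G_c/D). Define ϖ_l : [0, δ] → ℝ by ϖ_l(z) = (∫_{{ξ∈ℝ³ : ‖ξ‖≤δ, ξ₃≥z}} ‖ξ‖² dξ)/(∫_{{ξ∈ℝ³ : ‖ξ‖≤δ}} ‖ξ‖² dξ). Then the energy balance 2·∫₀^δ (3/2)·[(3κ − 5μ₀)ϖ_l(z)² + 5μ₀ϖ_l(z)]·s_c² dz = G_c holds. -/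

import Mathlib

open MeasureTheory Real Set

noncomputable section PDaux

/-- integral of `a + x² + y²` over a disk of squared radius `R2`. -/
lemma PD_disk_integral (a R2 : ℝ) (hR2 : 0 ≤ R2) :
    ∫ q : ℝ × ℝ, Set.indicator {q : ℝ × ℝ | q.1 ^ 2 + q.2 ^ 2 ≤ R2}
      (fun q => a + q.1 ^ 2 + q.2 ^ 2) q = π * (a * R2 + R2 ^ 2 / 2) := by
  have key : ∀ p : ℝ × ℝ, (p.1 * cos p.2) ^ 2 + (p.1 * sin p.2) ^ 2 = p.1 ^ 2 := by
    intro p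
    have := sin_sq_add_cos_sq p.2
    nlinarith
  rw [← integral_comp_polarCoord_symm]
  have h1 : ∀ p : ℝ × ℝ,
      p.1 • Set.indicator {q : ℝ × ℝ | q.1 ^ 2 + q.2 ^ 2 ≤ R2}
        (fun q => a + q.1 ^ 2 + q.2 ^ 2) (polarCoord.symm p)
      = Set.indicator {r : ℝ | r ^ 2 ≤ R2} (fun r => r * (a + r ^ 2)) p.1 * 1 := by
    intro p
    rw [polarCoord_symm_apply]
    by_cases h : p.1 ^ 2 ≤ R2
    · rw [Set.indicator_of_mem (by simpa [key p] using h),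
        Set.indicator_of_mem (by exact h)]
      rw [smul_eq_mul]
      linear_combination p.1 * key p
    · rw [Set.indicator_of_notMem (by simpa [key p] using h),
        Set.indicator_of_notMem (by exact h)]
      simp
  simp_rw [h1]
  rw [polarCoord_target, Measure.volume_eq_prod]
  refine (setIntegral_prod_mul (L := ℝ)
    (fun r : ℝ => Set.indicator {r : ℝ | r ^ 2 ≤ R2} (fun r => r * (a + r ^ 2)) r)
    (fun _ : ℝ => (1:ℝ)) (Set.Ioi 0) (Set.Ioo (-π) π)).trans ?_
  have h2 : (∫ y in Set.Ioo (-π) π, (1 : ℝ)) = 2 * π := by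
    simp [Real.volume_Ioo]
    rw [max_eq_left (by positivity)]
    ring
  have hmeas : MeasurableSet {r : ℝ | r ^ 2 ≤ R2} :=
    measurableSet_le (by fun_prop) measurable_const
  rw [h2, setIntegral_indicator hmeas]
  have h3 : Set.Ioi (0:ℝ) ∩ {r : ℝ | r ^ 2 ≤ R2} = Set.Ioc 0 (Real.sqrt R2) := by
    ext r
    simp only [Set.mem_inter_iff, Set.mem_Ioi, Set.mem_setOf_eq, Set.mem_Ioc]
    constructor
    · rintro ⟨h0, hr⟩
      exact ⟨h0, (Real.le_sqrt h0.le hR2).2 hr⟩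
    · rintro ⟨h0, hr⟩
      exact ⟨h0, (Real.le_sqrt h0.le hR2).1 hr⟩
  rw [h3, ← intervalIntegral.integral_of_le (Real.sqrt_nonneg R2)]
  have h4 : ∫ r in (0:ℝ)..(Real.sqrt R2), r * (a + r ^ 2)
      = a * (Real.sqrt R2) ^ 2 / 2 + (Real.sqrt R2) ^ 4 / 4 := by
    have : ∀ x ∈ Set.uIcc (0:ℝ) (Real.sqrt R2),
        HasDerivAt (fun r => a * r ^ 2 / 2 + r ^ 4 / 4) (x * (a + x ^ 2)) x := by
      intro x _
      have h := (((hasDerivAt_pow 2 x).const_mul a).div_const 2).add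
        ((hasDerivAt_pow 4 x).div_const 4)
      refine h.congr_deriv ?_
      push_cast
      ring
    rw [intervalIntegral.integral_eq_sub_of_hasDerivAt this
      (Continuous.intervalIntegrable (by continuity) _ _)]
    ring
  rw [h4]
  have h5 : (Real.sqrt R2) ^ 2 = R2 := Real.sq_sqrt hR2
  have h6 : (Real.sqrt R2) ^ 4 = R2 ^ 2 := by
    rw [show (4:ℕ) = 2 * 2 from rfl, pow_mul, h5]
  rw [h5, h6]
  ring


lemma PD_cap3 (δ z : ℝ) (hδ : 0 ≤ δ) (hz : -δ ≤ z) (hzd : z ≤ δ) :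
    ∫ p : ℝ × ℝ × ℝ, Set.indicator
        {p : ℝ × ℝ × ℝ | p.1 ^ 2 + p.2.1 ^ 2 + p.2.2 ^ 2 ≤ δ ^ 2 ∧ z ≤ p.1}
        (fun p => p.1 ^ 2 + p.2.1 ^ 2 + p.2.2 ^ 2) p
      = π / 2 * (4 * δ ^ 5 / 5 - δ ^ 4 * z + z ^ 5 / 5) := by
  set K : Set (ℝ × ℝ × ℝ) :=
    {p : ℝ × ℝ × ℝ | p.1 ^ 2 + p.2.1 ^ 2 + p.2.2 ^ 2 ≤ δ ^ 2 ∧ z ≤ p.1} with hK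
  have hKclosed : IsClosed K := by
    have h' : K = {p : ℝ × ℝ × ℝ | p.1 ^ 2 + p.2.1 ^ 2 + p.2.2 ^ 2 ≤ δ ^ 2}
        ∩ {p : ℝ × ℝ × ℝ | z ≤ p.1} := rfl
    rw [h']
    exact (isClosed_le (by fun_prop) continuous_const).inter
      (isClosed_le continuous_const (by fun_prop))
  have hKbdd : Bornology.IsBounded K := by
    apply (Metric.isBounded_closedBall (x := (0 : ℝ × ℝ × ℝ)) (r := δ)).subset
    rintro ⟨x, y, w⟩ ⟨h1, _⟩
    simp only [Metric.mem_closedBall, dist_zero_right, Prod.norm_def, Real.norm_eq_abs,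
      max_le_iff, abs_le]
    refine ⟨⟨by nlinarith, by nlinarith⟩, ⟨by nlinarith, by nlinarith⟩,
      ⟨by nlinarith, by nlinarith⟩⟩
  have hKcomp : IsCompact K := Metric.isCompact_of_isClosed_isBounded hKclosed hKbdd
  have hKmeas : MeasurableSet K := hKclosed.measurableSet
  have hint : Integrable (K.indicator fun p : ℝ × ℝ × ℝ =>
      p.1 ^ 2 + p.2.1 ^ 2 + p.2.2 ^ 2) volume :=
    (integrable_indicator_iff hKmeas).2
      ((Continuous.continuousOn (by fun_prop)).integrableOn_compact hKcomp)
  rw [Measure.volume_eq_prod] at hint ⊢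
  rw [integral_prod _ hint]
  have hinner : ∀ t : ℝ,
      (∫ q : ℝ × ℝ, K.indicator (fun p : ℝ × ℝ × ℝ =>
          p.1 ^ 2 + p.2.1 ^ 2 + p.2.2 ^ 2) (t, q))
        = Set.indicator (Set.Icc z δ) (fun t => π / 2 * (δ ^ 4 - t ^ 4)) t := by
    intro t
    rcases lt_or_ge t z with ht | ht
    · rw [Set.indicator_of_notMem (by simp [Set.mem_Icc]; intro h; linarith)]
      have : ∀ q : ℝ × ℝ, K.indicator (fun p : ℝ × ℝ × ℝ =>
          p.1 ^ 2 + p.2.1 ^ 2 + p.2.2 ^ 2) (t, q) = 0 := by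
        intro q
        apply Set.indicator_of_notMem
        simp only [hK, Set.mem_setOf_eq, not_and]
        intro _
        linarith
      simp [this]
    rcases lt_or_ge δ t with ht2 | ht2
    · rw [Set.indicator_of_notMem (by simp [Set.mem_Icc]; intro h; linarith)]
      have : ∀ q : ℝ × ℝ, K.indicator (fun p : ℝ × ℝ × ℝ =>
          p.1 ^ 2 + p.2.1 ^ 2 + p.2.2 ^ 2) (t, q) = 0 := by
        intro q
        apply Set.indicator_of_notMem
        simp only [hK, Set.mem_setOf_eq, not_and]
        intro h
        exfalso
        nlinarith [sq_nonneg q.1, sq_nonneg q.2]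
      simp [this]
    · rw [Set.indicator_of_mem (Set.mem_Icc.2 ⟨ht, ht2⟩)]
      have heq : ∀ q : ℝ × ℝ, K.indicator (fun p : ℝ × ℝ × ℝ =>
          p.1 ^ 2 + p.2.1 ^ 2 + p.2.2 ^ 2) (t, q)
          = Set.indicator {q : ℝ × ℝ | q.1 ^ 2 + q.2 ^ 2 ≤ δ ^ 2 - t ^ 2}
            (fun q => t ^ 2 + q.1 ^ 2 + q.2 ^ 2) q := by
        intro q
        by_cases h : q.1 ^ 2 + q.2 ^ 2 ≤ δ ^ 2 - t ^ 2
        · rw [Set.indicator_of_mem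
            (show (t, q) ∈ K from ⟨by dsimp only; linarith, ht⟩),
            Set.indicator_of_mem
            (show q ∈ {q : ℝ × ℝ | q.1 ^ 2 + q.2 ^ 2 ≤ δ ^ 2 - t ^ 2} from h)]
        · rw [Set.indicator_of_notMem
            (show (t, q) ∉ K by
              simp only [hK, Set.mem_setOf_eq, not_and]
              intro hc _
              exact h (by linarith)),
            Set.indicator_of_notMem
            (show q ∉ {q : ℝ × ℝ | q.1 ^ 2 + q.2 ^ 2 ≤ δ ^ 2 - t ^ 2} from h)]
      simp_rw [heq]
      rw [PD_disk_integral (t ^ 2) (δ ^ 2 - t ^ 2) (by nlinarith)]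
      ring
  simp_rw [hinner]
  rw [integral_indicator measurableSet_Icc, integral_Icc_eq_integral_Ioc,
    ← intervalIntegral.integral_of_le hzd]
  have hD : ∀ x ∈ Set.uIcc z δ, HasDerivAt
      (fun t => π / 2 * (δ ^ 4 * t - t ^ 5 / 5)) (π / 2 * (δ ^ 4 - x ^ 4)) x := by
    intro x _
    have h := (((hasDerivAt_id x).const_mul (δ ^ 4)).sub
      ((hasDerivAt_pow 5 x).div_const 5)).const_mul (π / 2)
    refine h.congr_deriv ?_
    push_cast
    ring
  rw [intervalIntegral.integral_eq_sub_of_hasDerivAt hD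
    (Continuous.intervalIntegrable (by continuity) _ _)]
  ring


def PDequiv : EuclideanSpace ℝ (Fin 3) ≃ᵐ ℝ × ℝ × ℝ :=
  (MeasurableEquiv.toLp 2 (Fin 3 → ℝ)).symm.trans
    ((MeasurableEquiv.piFinSuccAbove (fun _ : Fin 3 => ℝ) 2).trans
      ((MeasurableEquiv.refl ℝ).prodCongr (MeasurableEquiv.finTwoArrow)))

lemma PDequiv_apply (ξ : EuclideanSpace ℝ (Fin 3)) : PDequiv ξ = (ξ 2, ξ 0, ξ 1) := rfl

lemma PDequiv_mp : MeasurePreserving (⇑PDequiv) volume volume := by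
  have h1 := EuclideanSpace.volume_preserving_symm_measurableEquiv_toLp (Fin 3)
  have h2 := volume_preserving_piFinSuccAbove (fun _ : Fin 3 => ℝ) 2
  have h3 := (MeasurePreserving.id (volume : Measure ℝ)).prod
    (volume_preserving_finTwoArrow ℝ)
  exact (h3.comp h2).comp h1

lemma PD_norm_sq (ξ : EuclideanSpace ℝ (Fin 3)) :
    ‖ξ‖ ^ 2 = ξ 0 ^ 2 + ξ 1 ^ 2 + ξ 2 ^ 2 := by
  rw [EuclideanSpace.norm_eq, Real.sq_sqrt (by positivity)]
  simp [Fin.sum_univ_three, Real.norm_eq_abs, sq_abs]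

lemma PD_cap_euclid (δ z : ℝ) (hδ : 0 ≤ δ) (hz : -δ ≤ z) (hzd : z ≤ δ) :
    ∫ ξ in {ξ : EuclideanSpace ℝ (Fin 3) | ‖ξ‖ ≤ δ ∧ z ≤ ξ 2}, ‖ξ‖ ^ 2
      = π / 2 * (4 * δ ^ 5 / 5 - δ ^ 4 * z + z ^ 5 / 5) := by
  have hSmeas : MeasurableSet {ξ : EuclideanSpace ℝ (Fin 3) | ‖ξ‖ ≤ δ ∧ z ≤ ξ 2} := by
    have h' : {ξ : EuclideanSpace ℝ (Fin 3) | ‖ξ‖ ≤ δ ∧ z ≤ ξ 2}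
        = {ξ : EuclideanSpace ℝ (Fin 3) | ‖ξ‖ ≤ δ} ∩ {ξ | z ≤ ξ 2} := rfl
    rw [h']
    exact ((isClosed_le (by fun_prop) continuous_const).inter
      (isClosed_le continuous_const
        (EuclideanSpace.proj (2 : Fin 3)).continuous)).measurableSet
  rw [← integral_indicator hSmeas]
  have hfun : (fun ξ : EuclideanSpace ℝ (Fin 3) =>
      Set.indicator {ξ : EuclideanSpace ℝ (Fin 3) | ‖ξ‖ ≤ δ ∧ z ≤ ξ 2}
        (fun ξ => ‖ξ‖ ^ 2) ξ)
      = fun ξ => Set.indicator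
          {p : ℝ × ℝ × ℝ | p.1 ^ 2 + p.2.1 ^ 2 + p.2.2 ^ 2 ≤ δ ^ 2 ∧ z ≤ p.1}
          (fun p => p.1 ^ 2 + p.2.1 ^ 2 + p.2.2 ^ 2) (PDequiv ξ) := by
    funext ξ
    rw [PDequiv_apply]
    by_cases hmem : ‖ξ‖ ≤ δ ∧ z ≤ ξ 2
    · rw [Set.indicator_of_mem (show ξ ∈ {ξ : EuclideanSpace ℝ (Fin 3) | ‖ξ‖ ≤ δ ∧ z ≤ ξ 2} from hmem), Set.indicator_of_mem
        (show ((ξ 2, ξ 0, ξ 1) : ℝ × ℝ × ℝ) ∈ _ by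
          refine ⟨?_, hmem.2⟩
          dsimp only
          nlinarith [PD_norm_sq ξ, hmem.1, norm_nonneg ξ])]
      dsimp only
      nlinarith [PD_norm_sq ξ]
    · rw [Set.indicator_of_notMem (show ξ ∉ {ξ : EuclideanSpace ℝ (Fin 3) | ‖ξ‖ ≤ δ ∧ z ≤ ξ 2} from hmem), Set.indicator_of_notMem
        (show ((ξ 2, ξ 0, ξ 1) : ℝ × ℝ × ℝ) ∉ _ by
          intro hc
          apply hmem
          refine ⟨?_, hc.2⟩
          nlinarith [PD_norm_sq ξ, hc.1, norm_nonneg ξ])]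
  rw [hfun, PDequiv_mp.integral_comp PDequiv.measurableEmbedding]
  exact PD_cap3 δ z hδ hz hzd


lemma PD_ball_euclid (δ : ℝ) (hδ : 0 ≤ δ) :
    ∫ ξ in {ξ : EuclideanSpace ℝ (Fin 3) | ‖ξ‖ ≤ δ}, ‖ξ‖ ^ 2 = 4 * π * δ ^ 5 / 5 := by
  have hset : {ξ : EuclideanSpace ℝ (Fin 3) | ‖ξ‖ ≤ δ}
      = {ξ : EuclideanSpace ℝ (Fin 3) | ‖ξ‖ ≤ δ ∧ -δ ≤ ξ 2} := by
    ext ξ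
    simp only [Set.mem_setOf_eq]
    exact ⟨fun h => ⟨h, by nlinarith [PD_norm_sq ξ, norm_nonneg ξ]⟩, fun h => h.1⟩
  rw [hset, PD_cap_euclid δ (-δ) hδ (by linarith) (by linarith)]
  ring

end PDaux


theorem critical_stretch_energy_balance (δ κ μ₀ Gc : ℝ) (hδ : 0 < δ)
    (hD : 0 < (9 * κ - 15 * μ₀) * (125 * δ / 1848) + 15 * μ₀ * (5 * δ / 24))
    (hGc : 0 ≤ Gc)
    (sc : ℝ)
    (hsc : sc = Real.sqrt (Gc /
      ((9 * κ - 15 * μ₀) * (125 * δ / 1848) + 15 * μ₀ * (5 * δ / 24))))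
    (ϖ : ℝ → ℝ)
    (hϖ : ∀ z ∈ Set.Icc (0:ℝ) δ,
      ϖ z = (∫ ξ in {ξ : EuclideanSpace ℝ (Fin 3) | ‖ξ‖ ≤ δ ∧ z ≤ ξ 2}, ‖ξ‖ ^ 2) /
        (∫ ξ in {ξ : EuclideanSpace ℝ (Fin 3) | ‖ξ‖ ≤ δ}, ‖ξ‖ ^ 2)) :
    2 * ∫ z in (0:ℝ)..δ,
        (3 / 2) * ((3 * κ - 5 * μ₀) * (ϖ z) ^ 2 + 5 * μ₀ * ϖ z) * sc ^ 2
      = Gc := by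
  have hπ := Real.pi_pos
  have hϖ' : ∀ z ∈ Set.Icc (0:ℝ) δ,
      ϖ z = 1 / 2 - 5 * z / (8 * δ) + z ^ 5 / (8 * δ ^ 5) := by
    intro z hz
    rw [hϖ z hz, PD_cap_euclid δ z hδ.le (by linarith [hz.1]) hz.2,
      PD_ball_euclid δ hδ.le]
    field_simp
    ring
  have hcong : (∫ z in (0:ℝ)..δ,
        (3 / 2) * ((3 * κ - 5 * μ₀) * (ϖ z) ^ 2 + 5 * μ₀ * ϖ z) * sc ^ 2)
      = ∫ z in (0:ℝ)..δ,
        (3 / 2) * ((3 * κ - 5 * μ₀) * (1 / 2 - 5 * z / (8 * δ) + z ^ 5 / (8 * δ ^ 5)) ^ 2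
          + 5 * μ₀ * (1 / 2 - 5 * z / (8 * δ) + z ^ 5 / (8 * δ ^ 5))) * sc ^ 2 := by
    apply intervalIntegral.integral_congr
    intro z hz
    rw [Set.uIcc_of_le hδ.le] at hz
    simp only [hϖ' z hz]
  rw [hcong]
  have hF : ∀ x ∈ Set.uIcc (0:ℝ) δ, HasDerivAt
      (fun x : ℝ => 3 * sc ^ 2 / 2 *
        ((3 * κ - 5 * μ₀) / 64 *
          (16 * x - 20 / δ * x ^ 2 + 25 / (3 * δ ^ 2) * x ^ 3 + 4 / (3 * δ ^ 5) * x ^ 6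
            - 10 / (7 * δ ^ 6) * x ^ 7 + 1 / (11 * δ ^ 10) * x ^ 11)
          + 5 * μ₀ * (1 / 2 * x - 5 / (16 * δ) * x ^ 2 + 1 / (48 * δ ^ 5) * x ^ 6)))
      ((3 / 2) * ((3 * κ - 5 * μ₀) * (1 / 2 - 5 * x / (8 * δ) + x ^ 5 / (8 * δ ^ 5)) ^ 2
          + 5 * μ₀ * (1 / 2 - 5 * x / (8 * δ) + x ^ 5 / (8 * δ ^ 5))) * sc ^ 2) x := by
    intro x _
    have hP := (((((((hasDerivAt_id x).const_mul (16:ℝ)).sub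
      ((hasDerivAt_pow 2 x).const_mul (20 / δ))).add
      ((hasDerivAt_pow 3 x).const_mul (25 / (3 * δ ^ 2)))).add
      ((hasDerivAt_pow 6 x).const_mul (4 / (3 * δ ^ 5)))).sub
      ((hasDerivAt_pow 7 x).const_mul (10 / (7 * δ ^ 6)))).add
      ((hasDerivAt_pow 11 x).const_mul (1 / (11 * δ ^ 10))))
    have hQ := (((hasDerivAt_id x).const_mul ((1:ℝ)/2)).sub
      ((hasDerivAt_pow 2 x).const_mul (5 / (16 * δ)))).add
      ((hasDerivAt_pow 6 x).const_mul (1 / (48 * δ ^ 5)))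
    have h := ((hP.const_mul ((3 * κ - 5 * μ₀) / 64)).add
      (hQ.const_mul (5 * μ₀))).const_mul (3 * sc ^ 2 / 2)
    refine h.congr_deriv ?_
    push_cast
    field_simp
    ring
  rw [intervalIntegral.integral_eq_sub_of_hasDerivAt hF
    (Continuous.intervalIntegrable (by fun_prop (disch := norm_num)) _ _)]
  have hsq : sc ^ 2 = Gc /
      ((9 * κ - 15 * μ₀) * (125 * δ / 1848) + 15 * μ₀ * (5 * δ / 24)) := by
    rw [hsc]
    exact Real.sq_sqrt (div_nonneg hGc hD.le)
  have hkey : 2 * (3 * sc ^ 2 / 2 *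
        ((3 * κ - 5 * μ₀) / 64 *
          (16 * δ - 20 / δ * δ ^ 2 + 25 / (3 * δ ^ 2) * δ ^ 3 + 4 / (3 * δ ^ 5) * δ ^ 6
            - 10 / (7 * δ ^ 6) * δ ^ 7 + 1 / (11 * δ ^ 10) * δ ^ 11)
          + 5 * μ₀ * (1 / 2 * δ - 5 / (16 * δ) * δ ^ 2 + 1 / (48 * δ ^ 5) * δ ^ 6))
      - 3 * sc ^ 2 / 2 *
        ((3 * κ - 5 * μ₀) / 64 *
          (16 * 0 - 20 / δ * 0 ^ 2 + 25 / (3 * δ ^ 2) * 0 ^ 3 + 4 / (3 * δ ^ 5) * 0 ^ 6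
            - 10 / (7 * δ ^ 6) * 0 ^ 7 + 1 / (11 * δ ^ 10) * 0 ^ 11)
          + 5 * μ₀ * (1 / 2 * 0 - 5 / (16 * δ) * 0 ^ 2 + 1 / (48 * δ ^ 5) * 0 ^ 6)))
      = sc ^ 2 * ((9 * κ - 15 * μ₀) * (125 * δ / 1848) + 15 * μ₀ * (5 * δ / 24)) := by
    field_simp
    ring
  rw [hkey, hsq, div_mul_cancel₀ _ hD.ne']
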